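/- arXiv:1601.00167 — 5 statements merged into one kernel-verified Lean document; each statement's English description precedes it below -/
import Mathlib

section
/- (Threshold characterization.) For constants Ψ₁ > 0, Ψ₂ > 0, 0 < δ < T, and any expected service level Ŝ > 0, the strategy δ yields a strictly higher User payoff than the strategy T, i.e. Ψ₁/δ + Ψ₂·Ŝ·δ > Ψ₁/T + Ψ₂·Ŝ·T, if and only if Ŝ < μ, where μ = (Ψ₁/Ψ₂)·1/(δ·T). -/
/-- Threshold characterization: `δ` beats `T` iff `Shat < μ = (Ψ₁/Ψ₂)·1/(δ·T)`. -/
theorem threshold_characterization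
    (Ψ₁ Ψ₂ Shat δ T : ℝ) (hΨ₁ : 0 < Ψ₁) (hΨ₂ : 0 < Ψ₂) (hShat : 0 < Shat)
    (hδ : 0 < δ) (hδT : δ < T) :
    Ψ₁ / δ + Ψ₂ * Shat * δ > Ψ₁ / T + Ψ₂ * Shat * T ↔ Shat < Ψ₁ / Ψ₂ * (1 / (δ * T)) := by
  have hT : 0 < T := hδ.trans hδT
  have key : Ψ₁ / Ψ₂ * (1 / (δ * T)) = Ψ₁ / (Ψ₂ * (δ * T)) := by
    field_simp
  rw [gt_iff_lt, div_add' _ _ _ hT.ne', div_add' _ _ _ hδ.ne',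
    div_lt_div_iff₀ hT hδ, key, lt_div_iff₀ (mul_pos hΨ₂ (mul_pos hδ hT))]
  constructor <;> intro h <;> nlinarith [mul_pos hδ hT, sub_pos.mpr hδT,
    mul_pos hΨ₂ hShat, mul_pos (mul_pos hΨ₂ hShat) (sub_pos.mpr hδT)]
end

section
/- (Theorem 1, case Ŝ < μ.) For constants Ψ₁ > 0, Ψ₂ > 0, 0 < δ < T, and expected service level Ŝ with 0 < Ŝ < μ where μ = (Ψ₁/Ψ₂)·1/(δ·T), the connection time δ is the unique best response of the User: for every t ∈ [δ, T] with t ≠ δ, Ψ₁/δ + Ψ₂·Ŝ·δ > Ψ₁/t + Ψ₂·Ŝ·t. -/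
/-- Theorem 1, case `Shat < μ`: the connection time `δ` is the unique best response. -/
theorem best_response_below_threshold
    (Ψ₁ Ψ₂ Shat δ T : ℝ) (hΨ₁ : 0 < Ψ₁) (hΨ₂ : 0 < Ψ₂)
    (hδ : 0 < δ) (hδT : δ < T)
    (hShatpos : 0 < Shat) (hShat : Shat < Ψ₁ / Ψ₂ * (1 / (δ * T))) :
    ∀ t ∈ Set.Icc δ T, t ≠ δ →
      Ψ₁ / δ + Ψ₂ * Shat * δ > Ψ₁ / t + Ψ₂ * Shat * t := by
  intro t ht hne
  obtain ⟨h1, h2⟩ := ht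
  have htδ : δ < t := lt_of_le_of_ne h1 (Ne.symm hne)
  have ht0 : 0 < t := hδ.trans htδ
  have hT : 0 < T := hδ.trans hδT
  have hkey : Ψ₂ * Shat * δ * T < Ψ₁ := by
    have h := mul_lt_mul_of_pos_right hShat (by positivity : (0:ℝ) < Ψ₂ * (δ * T))
    calc Ψ₂ * Shat * δ * T = Shat * (Ψ₂ * (δ * T)) := by ring
    _ < Ψ₁ / Ψ₂ * (1 / (δ * T)) * (Ψ₂ * (δ * T)) := h
    _ = Ψ₁ := by field_simp
  have hbound : Ψ₂ * Shat * δ * t < Ψ₁ := by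
    have : Ψ₂ * Shat * δ * t ≤ Ψ₂ * Shat * δ * T := by
      have := mul_pos (mul_pos hΨ₂ hShatpos) hδ
      nlinarith
    linarith
  rw [gt_iff_lt, div_add' _ _ _ ht0.ne', div_add' _ _ _ hδ.ne',
    div_lt_div_iff₀ ht0 hδ]
  nlinarith [mul_pos (sub_pos.mpr htδ) (sub_pos.mpr hbound)]
end

section
/- (Theorem 1, case Ŝ ≥ μ.) For constants Ψ₁ > 0, Ψ₂ > 0, 0 < δ < T, and expected service level Ŝ ≥ μ where μ = (Ψ₁/Ψ₂)·1/(δ·T), the connection time T is a best response of the User: for every t ∈ [δ, T], Ψ₁/T + Ψ₂·Ŝ·T ≥ Ψ₁/t + Ψ₂·Ŝ·t. -/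
/-- Theorem 1, case `Shat ≥ μ`: the full visiting time `T` is a best response. -/
theorem best_response_above_threshold
    (Ψ₁ Ψ₂ Shat δ T : ℝ) (hΨ₁ : 0 < Ψ₁) (hΨ₂ : 0 < Ψ₂)
    (hδ : 0 < δ) (hδT : δ < T)
    (hShat : Shat ≥ Ψ₁ / Ψ₂ * (1 / (δ * T))) :
    ∀ t ∈ Set.Icc δ T,
      Ψ₁ / T + Ψ₂ * Shat * T ≥ Ψ₁ / t + Ψ₂ * Shat * t := by
  intro t ⟨ht1, ht2⟩
  have hT : 0 < T := hδ.trans hδT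
  have ht : 0 < t := hδ.trans_le ht1
  have hkey : Ψ₁ ≤ Shat * (Ψ₂ * (δ * T)) := by
    have h1 : Ψ₁ / (Ψ₂ * (δ * T)) ≤ Shat := by
      calc Ψ₁ / (Ψ₂ * (δ * T)) = Ψ₁ / Ψ₂ * (1 / (δ * T)) := by
            field_simp
        _ ≤ Shat := hShat
    exact (div_le_iff₀ (by positivity)).mp h1
  have hS : 0 < Shat := by nlinarith [mul_pos hΨ₂ (mul_pos hδ hT)]
  have h2 : Ψ₁ ≤ Ψ₂ * Shat * (t * T) := by nlinarith [mul_pos hS hΨ₂, mul_le_mul_of_nonneg_left ht1 (mul_pos (mul_pos hS hΨ₂) hT).le]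
  rw [ge_iff_le, div_add' _ _ _ ht.ne', div_add' _ _ _ hT.ne',
    div_le_div_iff₀ ht hT]
  nlinarith [mul_nonneg (sub_nonneg.mpr ht2) (sub_nonneg.mpr h2)]
end

section
/- (Monotonicity of the User's best response in the offered service level.) For constants Ψ₁ > 0, Ψ₂ > 0 and 0 < δ < T, suppose 0 < Ŝ₁ < Ŝ₂, t₁ ∈ [δ, T] maximizes the User's payoff U(Ŝ₁, ·) over [δ, T], and t₂ ∈ [δ, T] maximizes U(Ŝ₂, ·) over [δ, T]. Then t₁ ≤ t₂. -/
/-- Monotonicity of the User's best response in the offered service level. -/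
theorem best_response_monotone
    (Ψ₁ Ψ₂ δ T Shat₁ Shat₂ t₁ t₂ : ℝ) (hΨ₁ : 0 < Ψ₁) (hΨ₂ : 0 < Ψ₂)
    (hδ : 0 < δ) (hδT : δ < T)
    (hShat₁ : 0 < Shat₁) (hShat : Shat₁ < Shat₂)
    (ht₁mem : t₁ ∈ Set.Icc δ T) (ht₂mem : t₂ ∈ Set.Icc δ T)
    (ht₁ : ∀ t ∈ Set.Icc δ T, Ψ₁ / t + Ψ₂ * Shat₁ * t ≤ Ψ₁ / t₁ + Ψ₂ * Shat₁ * t₁)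
    (ht₂ : ∀ t ∈ Set.Icc δ T, Ψ₁ / t + Ψ₂ * Shat₂ * t ≤ Ψ₁ / t₂ + Ψ₂ * Shat₂ * t₂) :
    t₁ ≤ t₂ := by
  by_contra h
  push_neg at h
  have h1 := ht₁ t₂ ht₂mem
  have h2 := ht₂ t₁ ht₁mem
  nlinarith [mul_pos hΨ₂ (sub_pos.mpr hShat), sub_pos.mpr h]
end

section
/- (Theorem 2: the Company's optimal strategy.) Let A = {1, …, n} be a finite set of User types with weights α_i ≥ 0 summing to 1, let Ψ > 0, Θ > 0, 0 < δ < T, and let μ_i > 0 be the threshold of type i. For Ŝ ∈ ℝ define the best-response connection time t_i*(Ŝ) = δ if Ŝ < μ_i and t_i*(Ŝ) = T if Ŝ ≥ μ_i, and the Company's payoff U_C(Ŝ) = Σ_{i∈A} α_i·(Ψ·t_i*(Ŝ) − Θ·Ŝ). Then for any strategy interval [S_min, S_max] with S_min ≤ S_max, there exists Ŝ* belonging to the finite set {S_min} ∪ {μ_i : i ∈ A, S_min ≤ μ_i ≤ S_max} such that U_C(Ŝ*) ≥ U_C(Ŝ) for all Ŝ ∈ [S_min, S_max]; in particular U_C attains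 its maximum over [S_min, S_max], and it does so either at S_min or at one of the thresholds μ_i. -/
/-- Theorem 2: the Company's optimal strategy is attained either at the
minimum service level `Smin` or at one of the User thresholds `μ i`. -/
theorem company_optimal_strategy
    (n : ℕ) (α : Fin n → ℝ) (hα : ∀ i, 0 ≤ α i) (hsum : ∑ i, α i = 1)
    (Ψ Θ δ T : ℝ) (hΨ : 0 < Ψ) (hΘ : 0 < Θ) (hδ : 0 < δ) (hδT : δ < T)
    (μ : Fin n → ℝ) (hμ : ∀ i, 0 < μ i)
    (tstar : ℝ → Fin n → ℝ)
    (htstar : ∀ Shat i, tstar Shat i = if Shat < μ i then δ else T)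
    (UC : ℝ → ℝ)
    (hUC : ∀ Shat, UC Shat = ∑ i, α i * (Ψ * tstar Shat i - Θ * Shat))
    (Smin Smax : ℝ) (hS : Smin ≤ Smax) :
    ∃ Shatstar,
      (Shatstar = Smin ∨ ∃ i, Shatstar = μ i ∧ Smin ≤ μ i ∧ μ i ≤ Smax) ∧
      ∀ Shat ∈ Set.Icc Smin Smax, UC Shat ≤ UC Shatstar := by
  classical
  -- finite candidate set
  set F : Finset ℝ :=
    insert Smin ((Finset.univ.filter (fun i => Smin ≤ μ i ∧ μ i ≤ Smax)).image μ) with hF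
  have hFne : F.Nonempty := ⟨Smin, Finset.mem_insert_self _ _⟩
  obtain ⟨Shatstar, hmem, hmax⟩ := F.exists_max_image UC hFne
  refine ⟨Shatstar, ?_, ?_⟩
  · rcases Finset.mem_insert.mp hmem with h | h
    · exact Or.inl h
    · obtain ⟨i, hi, hie⟩ := Finset.mem_image.mp h
      rcases Finset.mem_filter.mp hi with ⟨_, h1, h2⟩
      exact Or.inr ⟨i, hie.symm, h1, h2⟩
  · rintro Shat ⟨h1, h2⟩
    -- largest candidate ≤ Shat
    set G : Finset ℝ := F.filter (fun x => x ≤ Shat) with hG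
    have hGne : G.Nonempty := ⟨Smin, Finset.mem_filter.mpr ⟨Finset.mem_insert_self _ _, h1⟩⟩
    set s : ℝ := G.max' hGne with hs
    have hsG : s ∈ G := G.max'_mem hGne
    have hsF : s ∈ F := (Finset.mem_filter.mp hsG).1
    have hsle : s ≤ Shat := (Finset.mem_filter.mp hsG).2
    have hSmins : Smin ≤ s :=
      Finset.le_max' G Smin (Finset.mem_filter.mpr ⟨Finset.mem_insert_self _ _, h1⟩)
    -- same best responses
    have hiff : ∀ i, (Shat < μ i ↔ s < μ i) := by
      intro i
      constructor
      · intro h; exact lt_of_le_of_lt hsle h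
      · intro h
        by_contra hcon
        push_neg at hcon
        -- μ i ≤ Shat, show μ i ≤ s contradiction
        have : μ i ≤ s := by
          rcases le_or_gt Smin (μ i) with hc | hc
          · refine Finset.le_max' G (μ i) (Finset.mem_filter.mpr ⟨?_, hcon⟩)
            refine Finset.mem_insert.mpr (Or.inr (Finset.mem_image.mpr ⟨i, ?_, rfl⟩))
            exact Finset.mem_filter.mpr ⟨Finset.mem_univ i, hc, le_trans hcon h2⟩
          · exact le_trans hc.le hSmins
        exact absurd h (not_lt.mpr this)
    -- UC Shat ≤ UC s
    have hstep : UC Shat ≤ UC s := by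
      rw [hUC, hUC]
      apply Finset.sum_le_sum
      intro i _
      apply mul_le_mul_of_nonneg_left _ (hα i)
      apply sub_le_sub
      · exact le_of_eq (by rw [htstar, htstar, if_congr (hiff i) rfl rfl])
      · exact mul_le_mul_of_nonneg_left hsle hΘ.le
    exact le_trans hstep (hmax s hsF)
end
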